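/- Let G be a graph and construct H_G as follows: take 12 vertex-disjoint copies of G indexed G^z_{ij} for 1 ≤ i < j ≤ 4 and z ∈ {a,b}, together with four new vertices v_1, v_2, v_3, v_4, and add all edges from v_i and v_j to every vertex of G^a_{ij} and G^b_{ij}. Then G is 1-CFCN*-choosable if and only if H_G is 2-CFCN*-choosable. -/

import Mathlib

/-- `G` is `k`-CFCN*-choosable. -/
def CFCNstarChoosable {V : Type*} (G : SimpleGraph V) (k : ℕ) : Prop :=
  ∀ L : V → Finset ℕ, (∀ v, (L v).card = k) →
    ∃ c : V → Option ℕ, (∀ v a, c v = some a → a ∈ L v) ∧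
      ∀ v : V, ∃ a, ∃! u, (G.Adj v u ∨ u = v) ∧ c u = some a

/-- The graph `H_G`: twelve disjoint copies `G^z_{ij}` (`1 ≤ i < j ≤ 4`,
`z ∈ {a,b}`) of `G`, plus four vertices `v_1,…,v_4`, with `v_i` and `v_j`
joined to every vertex of `G^a_{ij}` and `G^b_{ij}`. -/
def HGraph {V : Type*} (G : SimpleGraph V) :
    SimpleGraph (Fin 4 ⊕ ({p : Fin 4 × Fin 4 // p.1 < p.2} × Bool × V)) :=
  SimpleGraph.fromRel (fun x y => match x, y with
    | Sum.inl l, Sum.inr (p, _, _) => l = p.val.1 ∨ l = p.val.2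
    | Sum.inr (p, z, u), Sum.inr (q, w, u') => p = q ∧ z = w ∧ G.Adj u u'
    | _, _ => False)


section Stmt17Aux

variable {V : Type*} {G : SimpleGraph V}

private lemma hg_not_adj_inl_inl (i j : Fin 4) :
    ¬ (HGraph G).Adj (Sum.inl i) (Sum.inl j) := by
  simp [HGraph, SimpleGraph.fromRel_adj]

private lemma hg_adj_inl_inr (l : Fin 4) (p : {p : Fin 4 × Fin 4 // p.1 < p.2}) (z : Bool) (u : V) :
    (HGraph G).Adj (Sum.inl l) (Sum.inr (p, z, u)) ↔ l = p.val.1 ∨ l = p.val.2 := by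
  simp [HGraph, SimpleGraph.fromRel_adj]

private lemma hg_adj_inr_inr (p q : {p : Fin 4 × Fin 4 // p.1 < p.2}) (z w : Bool) (u u' : V) :
    (HGraph G).Adj (Sum.inr (p, z, u)) (Sum.inr (q, w, u')) ↔ p = q ∧ z = w ∧ G.Adj u u' := by
  rw [show (HGraph G) = SimpleGraph.fromRel _ from rfl, SimpleGraph.fromRel_adj]
  constructor
  · rintro ⟨hne, h | h⟩
    · exact h
    · obtain ⟨rfl, rfl, h⟩ := h
      exact ⟨rfl, rfl, h.symm⟩
  · rintro ⟨rfl, rfl, h⟩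
    exact ⟨by simp [h.ne], Or.inl ⟨rfl, rfl, h⟩⟩

private lemma stmt17_forward (hG : CFCNstarChoosable G 1) : CFCNstarChoosable (HGraph G) 2 := by
  classical
  intro L hL
  -- the chosen color for each hub vertex
  set w : Fin 4 → ℕ := fun i => (L (Sum.inl i)).min'
    (Finset.card_pos.mp (by rw [hL]; norm_num)) with hw
  have hwmem : ∀ i, w i ∈ L (Sum.inl i) := fun i => Finset.min'_mem _ _
  -- the chosen color for copy vertices avoiding the hub color
  have hne : ∀ (p : {p : Fin 4 × Fin 4 // p.1 < p.2}) (z : Bool) (u : V),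
      ((L (Sum.inr (p, z, u))).erase (w p.val.1)).Nonempty := by
    intro p z u
    have hcard : 1 < (L (Sum.inr (p, z, u))).card := by rw [hL]; norm_num
    obtain ⟨b, hb, hbne⟩ := Finset.exists_mem_ne hcard (w p.val.1)
    exact ⟨b, Finset.mem_erase.mpr ⟨hbne, hb⟩⟩
  set t : {p : Fin 4 × Fin 4 // p.1 < p.2} → Bool → V → ℕ :=
    fun p z u => ((L (Sum.inr (p, z, u))).erase (w p.val.1)).min' (hne p z u) with ht
  have ht_mem : ∀ p z u, t p z u ∈ L (Sum.inr (p, z, u)) :=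
    fun p z u => Finset.erase_subset _ _ (Finset.min'_mem _ _)
  have ht_ne : ∀ p z u, t p z u ≠ w p.val.1 :=
    fun p z u => (Finset.mem_erase.mp (Finset.min'_mem _ _)).1
  -- colorings of copies via 1-choosability
  have hD : ∀ (p : {p : Fin 4 × Fin 4 // p.1 < p.2}) (z : Bool),
      ∃ d : V → Option ℕ, (∀ v a, d v = some a → a ∈ ({t p z v} : Finset ℕ)) ∧
        ∀ v : V, ∃ a, ∃! u, (G.Adj v u ∨ u = v) ∧ d u = some a :=
    fun p z => hG (fun u => {t p z u}) (fun u => Finset.card_singleton _)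
  choose D hD1 hD2 using hD
  refine ⟨Sum.elim (fun i => some (w i))
    (fun x => if w x.1.val.1 = w x.1.val.2 then D x.1 x.2.1 x.2.2 else none), ?_, ?_⟩
  · rintro (i | ⟨p, z, u⟩) a ha
    · simp only [Sum.elim_inl, Option.some.injEq] at ha
      exact ha ▸ hwmem i
    · simp only [Sum.elim_inr] at ha
      split at ha
      · have := hD1 p z u a ha
        rw [Finset.mem_singleton] at this
        exact this ▸ ht_mem p z u
      · exact absurd ha (by simp)
  · rintro (i | ⟨p, z, u⟩)
    · refine ⟨w i, Sum.inl i, ⟨Or.inr rfl, rfl⟩, ?_⟩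
      rintro (l | ⟨q, z', u'⟩) ⟨h1, h2⟩
      · rcases h1 with h1 | h1
        · exact absurd h1 (hg_not_adj_inl_inl i l)
        · exact h1
      · exfalso
        rcases h1 with h1 | h1
        · have h1' := (hg_adj_inl_inr (G := G) i q z' u').mp h1
          simp only [Sum.elim_inr] at h2
          split at h2
          · rename_i hmono
            have := hD1 q z' u' _ h2
            rw [Finset.mem_singleton] at this
            rcases h1' with h1' | h1'
            · exact ht_ne q z' u' (by rw [← this, h1'])
            · refine ht_ne q z' u' ?_
              rw [← this, h1']
              exact hmono.symm
          · exact (nomatch h2)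
        · exact (nomatch h1)
    · by_cases hmono : w p.val.1 = w p.val.2
      · obtain ⟨a, u₀, ⟨hadj₀, hD₀⟩, huniq₀⟩ := hD2 p z u
        have hta : a = t p z u₀ := Finset.mem_singleton.mp (hD1 p z u₀ a hD₀)
        refine ⟨a, Sum.inr (p, z, u₀), ⟨?_, by simp only [Sum.elim_inr]; rw [if_pos hmono]; exact hD₀⟩, ?_⟩
        · rcases hadj₀ with h | h
          · exact Or.inl ((hg_adj_inr_inr p p z z u u₀).mpr ⟨rfl, rfl, h⟩)
          · exact Or.inr (by rw [h])
        · rintro (l | ⟨q, z', u'⟩) ⟨h1, h2⟩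
          · exfalso
            rcases h1 with h1 | h1
            · have h1' := (hg_adj_inl_inr (G := G) l p z u).mp h1.symm
              simp only [Sum.elim_inl, Option.some.injEq] at h2
              rcases h1' with h1' | h1'
              · exact ht_ne p z u₀ (((h1' ▸ h2).trans hta).symm)
              · exact ht_ne p z u₀ (((hmono.trans (h1' ▸ h2)).trans hta).symm)
            · exact (nomatch h1)
          · simp only [Sum.elim_inr] at h2
            rcases h1 with h1 | h1
            · rw [hg_adj_inr_inr] at h1
              obtain ⟨rfl, rfl, hadj⟩ := h1
              rw [if_pos hmono] at h2
              have := huniq₀ u' ⟨Or.inl hadj, h2⟩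
              rw [this]
            · rw [Sum.inr.injEq, Prod.mk.injEq, Prod.mk.injEq] at h1
              obtain ⟨hq, hz, hu⟩ := h1
              rw [hq, hz, if_pos hmono] at h2
              have := huniq₀ u' ⟨Or.inr hu, h2⟩
              rw [hq, hz, this]
      · refine ⟨w p.val.1, Sum.inl p.val.1,
          ⟨Or.inl (((hg_adj_inl_inr p.val.1 p z u).mpr (Or.inl rfl)).symm), rfl⟩, ?_⟩
        rintro (l | ⟨q, z', u'⟩) ⟨h1, h2⟩
        · rcases h1 with h1 | h1
          · have h1' := (hg_adj_inl_inr (G := G) l p z u).mp h1.symm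
            rcases h1' with h1' | h1'
            · rw [h1']
            · exfalso
              simp only [Sum.elim_inl, Option.some.injEq] at h2
              refine hmono ?_
              rw [← h2, h1']
          · exact (nomatch h1)
        · exfalso
          simp only [Sum.elim_inr] at h2
          rcases h1 with h1 | h1
          · rw [hg_adj_inr_inr] at h1
            obtain ⟨rfl, rfl, _⟩ := h1
            rw [if_neg hmono] at h2
            exact nomatch h2
          · rw [Sum.inr.injEq, Prod.mk.injEq, Prod.mk.injEq] at h1
            obtain ⟨hq, hz, hu⟩ := h1
            rw [hq, hz, if_neg hmono] at h2
            exact nomatch h2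

private lemma stmt17_reverse (hH : CFCNstarChoosable (HGraph G) 2) : CFCNstarChoosable G 1 := by
  classical
  intro L hL
  have hf : ∀ u, ∃ a, L u = {a} := fun u => Finset.card_eq_one.mp (hL u)
  choose f hfL using hf
  have hcard2 : ({0, 1} : Finset ℕ).card = 2 := by decide
  obtain ⟨c, hc1, hc2⟩ := hH (fun _ => ({0, 1} : Finset ℕ)) (fun _ => hcard2)
  have hmem : ∀ y a, c y = some a → a = 0 ∨ a = 1 := by
    intro y a h
    have := hc1 y a h
    simpa using this
  have htri : ∀ i : Fin 4, c (Sum.inl i) = none ∨ c (Sum.inl i) = some 0 ∨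
      c (Sum.inl i) = some 1 := by
    intro i
    rcases h : c (Sum.inl i) with _ | a
    · exact Or.inl rfl
    · rcases hmem _ _ h with rfl | rfl
      · exact Or.inr (Or.inl rfl)
      · exact Or.inr (Or.inr rfl)
  obtain ⟨i, j, hlt, hcij⟩ : ∃ i j : Fin 4, i < j ∧ c (Sum.inl i) = c (Sum.inl j) := by
    set F : Fin 4 → Fin 3 := fun i =>
      if c (Sum.inl i) = none then 0 else if c (Sum.inl i) = some 0 then 1 else 2 with hF
    obtain ⟨i, j, hne, hFij⟩ := Fintype.exists_ne_map_eq_of_card_lt F (by norm_num)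
    rw [hF] at hFij
    have heq : c (Sum.inl i) = c (Sum.inl j) := by
      rcases htri i with hi | hi | hi <;> rcases htri j with hj | hj | hj <;>
        simp only [hi, hj, if_pos, if_neg, reduceCtorEq, reduceIte] at hFij ⊢ <;>
        first
          | rfl
          | exact absurd hFij (by decide)
    rcases lt_or_gt_of_ne hne with h | h
    · exact ⟨i, j, h, heq⟩
    · exact ⟨j, i, h, heq.symm⟩
  set p : {p : Fin 4 × Fin 4 // p.1 < p.2} := ⟨(i, j), hlt⟩ with hp
  have transfer : ∀ (z : Bool) (γ : ℕ) (u : V), c (Sum.inl i) ≠ some γ →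
      c (Sum.inl j) ≠ some γ →
      (∃! y, ((HGraph G).Adj (Sum.inr (p, z, u)) y ∨ y = Sum.inr (p, z, u)) ∧ c y = some γ) →
      ∃! w : V, (G.Adj u w ∨ w = u) ∧ c (Sum.inr (p, z, w)) = some γ := by
    intro z γ u hni hnj hy
    obtain ⟨y₀, ⟨hy₀adj, hy₀c⟩, hyuniq⟩ := hy
    have hform : ∃ w : V, (G.Adj u w ∨ w = u) ∧ y₀ = Sum.inr (p, z, w) := by
      rcases y₀ with l | ⟨q, z', w⟩
      · exfalso
        rcases hy₀adj with h | h
        · rcases (hg_adj_inl_inr (G := G) l p z u).mp h.symm with rfl | rfl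
          · exact hni hy₀c
          · exact hnj hy₀c
        · exact nomatch h
      · rcases hy₀adj with h | h
        · rw [hg_adj_inr_inr] at h
          obtain ⟨hq, hz, hadj⟩ := h
          exact ⟨w, Or.inl hadj, by rw [hq, hz]⟩
        · rw [Sum.inr.injEq, Prod.mk.injEq, Prod.mk.injEq] at h
          obtain ⟨hq, hz, hu⟩ := h
          exact ⟨w, Or.inr hu, by rw [hq, hz]⟩
    obtain ⟨w₀, hw₀adj, hw₀eq⟩ := hform
    subst hw₀eq
    refine ⟨w₀, ⟨hw₀adj, hy₀c⟩, ?_⟩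
    rintro w' ⟨hw'adj, hw'c⟩
    have heq : Sum.inr (p, z, w') = (Sum.inr (p, z, w₀) :
        Fin 4 ⊕ ({p : Fin 4 × Fin 4 // p.1 < p.2} × Bool × V)) := by
      apply hyuniq
      refine ⟨?_, hw'c⟩
      rcases hw'adj with h | h
      · exact Or.inl ((hg_adj_inr_inr p p z z u w').mpr ⟨rfl, rfl, h⟩)
      · exact Or.inr (by rw [h])
    simpa using heq
  have key : ∃ (z : Bool) (γ : ℕ), ∀ u : V,
      ∃! w : V, (G.Adj u w ∨ w = u) ∧ c (Sum.inr (p, z, w)) = some γ := by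
    rcases hx : c (Sum.inl i) with _ | x
    · -- both hub endpoints uncolored
      have hxj : c (Sum.inl j) = none := by rw [← hcij, hx]
      have absentCase : ∀ (z : Bool) (γ γ' : ℕ), (γ = 0 ∨ γ = 1) → (γ' = 0 ∨ γ' = 1) →
          γ ≠ γ' → (¬ ∃ w : V, c (Sum.inr (p, z, w)) = some γ') →
          ∀ u : V, ∃! w : V, (G.Adj u w ∨ w = u) ∧ c (Sum.inr (p, z, w)) = some γ := by
        intro z γ γ' hγ hγ' hnee habs u
        obtain ⟨a, hau⟩ := hc2 (Sum.inr (p, z, u))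
        have ha : a = γ := by
          obtain ⟨y₀, ⟨hadj, hcy⟩, _⟩ := hau
          have ha01 := hmem _ _ hcy
          have hcopy : ∃ w : V, c (Sum.inr (p, z, w)) = some a := by
            rcases y₀ with l | ⟨q, z', w⟩
            · exfalso
              rcases hadj with h | h
              · rcases (hg_adj_inl_inr (G := G) l p z u).mp h.symm with rfl | rfl
                · rw [hx] at hcy; exact nomatch hcy
                · rw [hxj] at hcy; exact nomatch hcy
              · exact nomatch h
            · rcases hadj with h | h
              · rw [hg_adj_inr_inr] at h
                obtain ⟨hq, hz, _⟩ := h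
                rw [← hq, ← hz] at hcy
                exact ⟨w, hcy⟩
              · rw [Sum.inr.injEq, Prod.mk.injEq, Prod.mk.injEq] at h
                obtain ⟨hq, hz, _⟩ := h
                rw [hq, hz] at hcy
                exact ⟨w, hcy⟩
          obtain ⟨w1, hw1⟩ := hcopy
          have hne' : a ≠ γ' := fun h => habs ⟨w1, by rw [← h]; exact hw1⟩
          rcases ha01 with rfl | rfl <;> rcases hγ with rfl | rfl <;>
            rcases hγ' with rfl | rfl <;> omega
        rw [ha] at hau
        exact transfer z γ u (by rw [hx]; exact fun h => nomatch h)
          (by rw [hxj]; exact fun h => nomatch h) hau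
      by_cases h0 : ∃ w : V, c (Sum.inr (p, true, w)) = some 0
      · by_cases h1 : ∃ w : V, c (Sum.inr (p, true, w)) = some 1
        · by_cases h0' : ∃ w : V, c (Sum.inr (p, false, w)) = some 0
          · by_cases h1' : ∃ w : V, c (Sum.inr (p, false, w)) = some 1
            · exfalso
              obtain ⟨a, y₀, ⟨hadj₀, hc₀⟩, huniq⟩ := hc2 (Sum.inl i)
              have ha01 := hmem _ _ hc₀
              obtain ⟨wt, hwt⟩ : ∃ w : V, c (Sum.inr (p, true, w)) = some a := by
                rcases ha01 with rfl | rfl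
                exacts [h0, h1]
              obtain ⟨wf, hwf⟩ : ∃ w : V, c (Sum.inr (p, false, w)) = some a := by
                rcases ha01 with rfl | rfl
                exacts [h0', h1']
              have ht := huniq (Sum.inr (p, true, wt))
                ⟨Or.inl ((hg_adj_inl_inr i p true wt).mpr (Or.inl rfl)), hwt⟩
              have hf2 := huniq (Sum.inr (p, false, wf))
                ⟨Or.inl ((hg_adj_inl_inr i p false wf).mpr (Or.inl rfl)), hwf⟩
              rw [← hf2] at ht
              simp at ht
            · exact ⟨false, 0, absentCase false 0 1 (Or.inl rfl) (Or.inr rfl)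
                (by norm_num) h1'⟩
          · exact ⟨false, 1, absentCase false 1 0 (Or.inr rfl) (Or.inl rfl)
              (by norm_num) h0'⟩
        · exact ⟨true, 0, absentCase true 0 1 (Or.inl rfl) (Or.inr rfl) (by norm_num) h1⟩
      · exact ⟨true, 1, absentCase true 1 0 (Or.inr rfl) (Or.inl rfl) (by norm_num) h0⟩
    · -- both hub endpoints colored x
      have hxj : c (Sum.inl j) = some x := by rw [← hcij, hx]
      have hx01 := hmem _ _ hx
      obtain ⟨γ, hγx, hγ01⟩ : ∃ γ : ℕ, γ ≠ x ∧ (γ = 0 ∨ γ = 1) := by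
        rcases hx01 with rfl | rfl
        · exact ⟨1, by norm_num, Or.inr rfl⟩
        · exact ⟨0, by norm_num, Or.inl rfl⟩
      refine ⟨true, γ, fun u => ?_⟩
      obtain ⟨a, hau⟩ := hc2 (Sum.inr (p, true, u))
      have ha : a = γ := by
        obtain ⟨y₀, ⟨hadj, hcy⟩, huniq⟩ := hau
        have ha01 := hmem _ _ hcy
        by_contra hne'
        have hax : a = x := by
          rcases ha01 with rfl | rfl <;> rcases hγ01 with h | h <;>
            rcases hx01 with rfl | rfl <;> omega
        have hti := huniq (Sum.inl i)
          ⟨Or.inl ((hg_adj_inl_inr i p true u).mpr (Or.inl rfl)).symm, by rw [hx, hax]⟩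
        have htj := huniq (Sum.inl j)
          ⟨Or.inl ((hg_adj_inl_inr j p true u).mpr (Or.inr rfl)).symm, by rw [hxj, hax]⟩
        rw [← htj] at hti
        have : i = j := by simpa using hti
        exact absurd this hlt.ne
      rw [ha] at hau
      exact transfer true γ u
        (by rw [hx]; exact fun h => hγx (Option.some.inj h).symm)
        (by rw [hxj]; exact fun h => hγx (Option.some.inj h).symm) hau
  obtain ⟨z, γ, hkey⟩ := key
  refine ⟨fun u => if c (Sum.inr (p, z, u)) = some γ then some (f u) else none, ?_, ?_⟩
  · intro u a ha
    change (if c (Sum.inr (p, z, u)) = some γ then some (f u) else none) = some a at ha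
    split at ha
    · rw [Option.some.injEq] at ha
      rw [hfL u, ← ha]
      exact Finset.mem_singleton_self _
    · exact nomatch ha
  · intro u
    obtain ⟨w₀, ⟨hadj₀, hcw₀⟩, huniq⟩ := hkey u
    refine ⟨f w₀, w₀, ⟨hadj₀, show (if c (Sum.inr (p, z, w₀)) = some γ then some (f w₀)
      else none) = some (f w₀) by rw [if_pos hcw₀]⟩, ?_⟩
    rintro w' ⟨hadj', hc'⟩
    by_cases h : c (Sum.inr (p, z, w')) = some γ
    · exact huniq w' ⟨hadj', h⟩
    · change (if c (Sum.inr (p, z, w')) = some γ then some (f w') else none)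
        = some (f w₀) at hc'
      rw [if_neg h] at hc'
      exact nomatch hc'

end Stmt17Aux

/-- `G` is 1-CFCN*-choosable iff `H_G` is 2-CFCN*-choosable. -/
theorem stmt_17 {V : Type*} (G : SimpleGraph V) :
    CFCNstarChoosable G 1 ↔ CFCNstarChoosable (HGraph G) 2 :=
  ⟨stmt17_forward, stmt17_reverse⟩
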